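/- Let K be a complex Hilbert space, let δ > 0, and let T be a bounded operator on K with ‖T‖ ≤ 1 such that ‖S·T − T·S‖ ≤ δ for every bounded operator S on K with ‖S‖ ≤ 1. Then for any two mutually orthogonal unit vectors ξ, η ∈ K, one has |⟨Tξ, ξ⟩ − ⟨Tη, η⟩| ≤ δ. -/

import Mathlib

open scoped InnerProductSpace

/-- If a contraction `T` on a Hilbert space almost commutes (up to δ) with every
contraction, then its diagonal matrix coefficients at orthogonal unit vectors differ by at
most δ. -/
theorem abs_inner_diag_sub_le_of_almost_central
    {K : Type*} [NormedAddCommGroup K] [InnerProductSpace ℂ K] [CompleteSpace K]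
    (δ : ℝ) (hδ : 0 < δ)
    (T : K →L[ℂ] K) (hT : ‖T‖ ≤ 1)
    (hcomm : ∀ S : K →L[ℂ] K, ‖S‖ ≤ 1 → ‖S * T - T * S‖ ≤ δ) :
    ∀ ξ η : K, ‖ξ‖ = 1 → ‖η‖ = 1 → ⟪ξ, η⟫_ℂ = 0 →
      ‖⟪ξ, T ξ⟫_ℂ - ⟪η, T η⟫_ℂ‖ ≤ δ := by
  intro ξ η hξ hη _
  set S : K →L[ℂ] K := (innerSL ℂ ξ).smulRight η with hS
  have hSnorm : ‖S‖ ≤ 1 := by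
    rw [hS, ContinuousLinearMap.norm_smulRight_apply, innerSL_apply_norm, hξ, hη]
    norm_num
  have hC := hcomm S hSnorm
  have hSapp : ∀ x, S x = ⟪ξ, x⟫_ℂ • η := fun x => rfl
  have hξξ : ⟪ξ, ξ⟫_ℂ = 1 := by
    rw [inner_self_eq_norm_sq_to_K, hξ]; norm_num
  have hηη : ⟪η, η⟫_ℂ = 1 := by
    rw [inner_self_eq_norm_sq_to_K, hη]; norm_num
  have key : ⟪η, (S * T - T * S) ξ⟫_ℂ = ⟪ξ, T ξ⟫_ℂ - ⟪η, T η⟫_ℂ := by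
    simp only [ContinuousLinearMap.sub_apply, ContinuousLinearMap.mul_apply,
      inner_sub_right, hSapp, inner_smul_right, map_smul, hξξ, hηη]
    ring
  calc ‖⟪ξ, T ξ⟫_ℂ - ⟪η, T η⟫_ℂ‖
      = ‖⟪η, (S * T - T * S) ξ⟫_ℂ‖ := by rw [key]
    _ ≤ ‖η‖ * ‖(S * T - T * S) ξ‖ := norm_inner_le_norm _ _
    _ ≤ ‖η‖ * (‖S * T - T * S‖ * ‖ξ‖) := by
        gcongr; exact ContinuousLinearMap.le_opNorm _ _
    _ ≤ δ := by rw [hξ, hη]; simpa using hC
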